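/- There exists a constant C > 0 such that for every real b ∈ [−1/2, 1/2] and every real E ≥ 1, |N_b(E) − (E/4)·log E − (γ − log 2 − 1/2)·(E/2)| ≤ C·√E, where N_b(E) = #{(n,k) ∈ ℕ×ℤ : 4n(n+|k−b|) ≤ E} and γ is the Euler–Mascheroni constant. In particular the first two terms of the Weyl asymptotics for the Aharonov–Bohm Laplacian on the Grushin sphere are independent of the flux b. -/

import Mathlib

open Real

lemma ab_card_bound (b L : ℝ) (hL : 0 ≤ L) :
    |((Finset.Icc ⌈b - L⌉ ⌊b + L⌋).card : ℝ) - 2 * L| ≤ 1 := by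
  rcases le_or_gt (⌈b - L⌉ : ℤ) ⌊b + L⌋ with h | h
  · have hcard : ((Finset.Icc ⌈b - L⌉ ⌊b + L⌋).card : ℤ) = ⌊b + L⌋ + 1 - ⌈b - L⌉ := by
      rw [Int.card_Icc]; omega
    have hcard' : ((Finset.Icc ⌈b - L⌉ ⌊b + L⌋).card : ℝ)
        = (⌊b + L⌋ : ℝ) + 1 - ⌈b - L⌉ := by
      exact_mod_cast congrArg (fun z : ℤ => (z : ℝ)) hcard
    rw [hcard', abs_le]
    have h1 : (⌊b + L⌋ : ℝ) ≤ b + L := Int.floor_le _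
    have h2 : b + L < ⌊b + L⌋ + 1 := Int.lt_floor_add_one _
    have h3 : b - L ≤ ⌈b - L⌉ := Int.le_ceil _
    have h4 : (⌈b - L⌉ : ℝ) < b - L + 1 := Int.ceil_lt_add_one _
    constructor <;> linarith
  · rw [Finset.Icc_eq_empty_of_lt h]
    simp only [Finset.card_empty, Nat.cast_zero, zero_sub, abs_neg]
    rw [abs_of_nonneg (by linarith)]
    by_contra hc
    push_neg at hc
    have : (⌈b - L⌉ : ℝ) ≤ b + L := by
      have := Int.ceil_lt_add_one (b - L)
      linarith
    exact absurd (Int.le_floor.mpr this) (not_le.mpr h)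

lemma ab_mem_iff (b E : ℝ) (hE : 0 ≤ E) (n : ℕ) (k : ℤ) :
    (0 < n ∧ 4 * n * ((n : ℝ) + |(k : ℝ) - b|) ≤ E) ↔
    (n ∈ Finset.Icc 1 ⌊Real.sqrt E / 2⌋₊ ∧
      k ∈ Finset.Icc ⌈b - (E / (4 * n) - n)⌉ ⌊b + (E / (4 * n) - n)⌋) := by
  simp only [Finset.mem_Icc, Int.ceil_le, Int.le_floor]
  constructor
  · rintro ⟨hn, h2⟩
    have hn' : (0 : ℝ) < n := by exact_mod_cast hn
    have habs : (0:ℝ) ≤ |(k : ℝ) - b| := abs_nonneg _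
    have hsq : (2 * (n:ℝ)) ^ 2 ≤ E := by nlinarith
    have hle : (2 * (n:ℝ)) ≤ Real.sqrt E := by
      rw [show (2 * (n:ℝ)) = Real.sqrt ((2*(n:ℝ))^2) from (Real.sqrt_sq (by positivity)).symm]
      exact Real.sqrt_le_sqrt hsq
    have hM : n ≤ ⌊Real.sqrt E / 2⌋₊ := Nat.le_floor (by linarith)
    have hL : |(k : ℝ) - b| ≤ E / (4 * n) - n := by
      rw [le_sub_iff_add_le, le_div_iff₀ (by positivity)]
      nlinarith
    rw [abs_le] at hL
    refine ⟨⟨hn, hM⟩, ?_, ?_⟩ <;> [linarith [hL.1]; linarith [hL.2]]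
  · rintro ⟨⟨hn, hM⟩, hk1, hk2⟩
    have hn' : (0 : ℝ) < n := by exact_mod_cast hn
    have h1 : (n : ℝ) ≤ Real.sqrt E / 2 := by
      calc (n : ℝ) ≤ (⌊Real.sqrt E / 2⌋₊ : ℝ) := by exact_mod_cast hM
        _ ≤ Real.sqrt E / 2 := Nat.floor_le (by positivity)
    have h4 : 4 * (n:ℝ) * n ≤ E := by
      nlinarith [Real.sq_sqrt hE, Real.sqrt_nonneg E]
    have hL : |(k : ℝ) - b| ≤ E / (4 * n) - n := by
      rw [abs_le]
      constructor <;> linarith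
    refine ⟨hn, ?_⟩
    have hstep : 4 * (n:ℝ) * ((n:ℝ) + |(k : ℝ) - b|) ≤ 4 * n * (n + (E / (4 * n) - n)) := by
      nlinarith
    calc 4 * (n:ℝ) * ((n:ℝ) + |(k : ℝ) - b|) ≤ 4 * n * (E / (4 * n)) := by
          rw [show (n:ℝ) + (E / (4 * n) - n) = E / (4*n) by ring] at hstep; exact hstep
      _ = E := by field_simp

lemma ab_count_eq (b E : ℝ) (hE : 0 ≤ E) :
    ({p : ℕ × ℤ | 0 < p.1 ∧ 4 * p.1 * ((p.1 : ℝ) + |(p.2 : ℝ) - b|) ≤ E}).ncard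
    = ∑ n ∈ Finset.Icc 1 ⌊Real.sqrt E / 2⌋₊,
        (Finset.Icc ⌈b - (E / (4 * n) - n)⌉ ⌊b + (E / (4 * n) - n)⌋).card := by
  set F := (Finset.Icc 1 ⌊Real.sqrt E / 2⌋₊).biUnion
    (fun n => (Finset.Icc ⌈b - (E / (4 * n) - n)⌉ ⌊b + (E / (4 * n) - n)⌋).image
      (fun k => ((n, k) : ℕ × ℤ))) with hF
  have hset : {p : ℕ × ℤ | 0 < p.1 ∧ 4 * p.1 * ((p.1 : ℝ) + |(p.2 : ℝ) - b|) ≤ E} = ↑F := by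
    ext ⟨n, k⟩
    rw [Set.mem_setOf_eq, ab_mem_iff b E hE n k]
    simp only [hF, Finset.coe_biUnion, Set.mem_iUnion, Finset.mem_coe, Finset.mem_image,
      Prod.mk.injEq]
    constructor
    · rintro ⟨h1, h2⟩
      exact ⟨n, h1, k, h2, rfl, rfl⟩
    · rintro ⟨m, hm, j, hj, rfl, rfl⟩
      exact ⟨hm, hj⟩
  rw [hset, Set.ncard_coe_finset, hF, Finset.card_biUnion]
  · exact Finset.sum_congr rfl fun n _ =>
      Finset.card_image_of_injective _ (fun a c h => (Prod.mk.injEq _ _ _ _ ▸ h : _ ∧ _).2)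
  · intro x _ y _ hxy
    rw [Function.onFun, Finset.disjoint_left]
    rintro p hp hq
    simp only [Finset.mem_image] at hp hq
    obtain ⟨a, _, rfl⟩ := hp
    obtain ⟨c, _, hc⟩ := hq
    exact hxy (congrArg Prod.fst hc.symm)

lemma ab_gauss (M : ℕ) : (∑ n ∈ Finset.Icc 1 M, (n : ℝ)) = M * (M + 1) / 2 := by
  induction M with
  | zero => simp
  | succ m ih =>
    rw [Finset.sum_Icc_succ_top (by omega : 1 ≤ m + 1), ih]
    push_cast; ring

lemma ab_harmonic (M : ℕ) (hM : 1 ≤ M) :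
    |(∑ n ∈ Finset.Icc 1 M, (1 : ℝ) / n) - Real.log M - Real.eulerMascheroniConstant|
      ≤ 1 / M := by
  have hM' : (0:ℝ) < M := by exact_mod_cast hM
  have hH : (∑ n ∈ Finset.Icc 1 M, (1 : ℝ) / n) = ((harmonic M : ℚ) : ℝ) := by
    rw [harmonic_eq_sum_Icc]; push_cast; simp [one_div]
  have hlow : Real.eulerMascheroniConstant < ((harmonic M : ℚ) : ℝ) - Real.log M := by
    have := Real.eulerMascheroniConstant_lt_eulerMascheroniSeq' M
    rwa [Real.eulerMascheroniSeq', if_neg (by omega)] at this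
  have hup : ((harmonic M : ℚ) : ℝ) - Real.log (M + 1) < Real.eulerMascheroniConstant := by
    have := Real.eulerMascheroniSeq_lt_eulerMascheroniConstant M
    rwa [Real.eulerMascheroniSeq] at this
  have hlog : Real.log (M + 1) - Real.log M ≤ 1 / M := by
    rw [← Real.log_div (by positivity) (by positivity)]
    have := Real.log_le_sub_one_of_pos (show (0:ℝ) < ((M:ℝ)+1)/M by positivity)
    have heq : ((M:ℝ)+1)/M - 1 = 1 / M := by field_simp; ring
    linarith
  rw [hH, abs_le]
  constructor <;> linarith

/-- Weyl's law for the Aharonov–Bohm Laplacian on the Grushin sphere, uniform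
in the flux `b ∈ [−1/2,1/2]`: there is `C > 0` such that for all `E ≥ 1`,
`|N_b(E) − (E/4)·log E − (γ − log 2 − 1/2)·(E/2)| ≤ C√E`, where
`N_b(E) = #{(n,k) : 4n(n+|k−b|) ≤ E}`. In particular the first two terms of
the asymptotics are independent of `b`. -/
theorem grushin_sphere_ab_weyl_law_uniform :
    ∃ C : ℝ, 0 < C ∧ ∀ b : ℝ, b ∈ Set.Icc (-(1:ℝ)/2) (1/2) → ∀ E : ℝ, 1 ≤ E →
      |(Set.ncard {p : ℕ × ℤ | 0 < p.1 ∧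
          (4 * p.1 * ((p.1 : ℝ) + |(p.2 : ℝ) - b|) ≤ E)} : ℝ)
        - E / 4 * Real.log E
        - (Real.eulerMascheroniConstant - Real.log 2 - 1 / 2) * (E / 2)|
      ≤ C * Real.sqrt E := by
  refine ⟨10, by norm_num, fun b _ E hE => ?_⟩
  have hE0 : (0:ℝ) ≤ E := by linarith
  have hγ1 := Real.one_half_lt_eulerMascheroniConstant
  have hγ2 := Real.eulerMascheroniConstant_lt_two_thirds
  have hl2a := Real.log_two_lt_d9
  have hl2b := Real.log_two_gt_d9
  have hsE1 : 1 ≤ Real.sqrt E := by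
    rw [show (1:ℝ) = Real.sqrt 1 by simp]
    exact Real.sqrt_le_sqrt hE
  rw [ab_count_eq b E hE0]
  rcases lt_or_ge E 4 with h4 | h4
  · -- small energies: the sum is empty
    have hs2 : Real.sqrt E < 2 := by
      have : Real.sqrt E < Real.sqrt 4 := Real.sqrt_lt_sqrt hE0 h4
      rwa [show Real.sqrt 4 = 2 by
        rw [show (4:ℝ) = 2^2 by norm_num, Real.sqrt_sq (by norm_num)]] at this
    have hM0 : ⌊Real.sqrt E / 2⌋₊ = 0 := Nat.floor_eq_zero.mpr (by linarith)
    rw [hM0, show Finset.Icc 1 0 = (∅ : Finset ℕ) from Finset.Icc_eq_empty_of_lt (by omega)]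
    simp only [Finset.sum_empty, Nat.cast_zero, zero_sub, abs_neg]
    have hlogE1 : 0 ≤ Real.log E := Real.log_nonneg hE
    have hlogE2 : Real.log E ≤ 2 * Real.log 2 := by
      calc Real.log E ≤ Real.log 4 := Real.log_le_log (by linarith) h4.le
        _ = 2 * Real.log 2 := by
          rw [show (4:ℝ) = 2^2 by norm_num, Real.log_pow]; push_cast; ring
    rw [abs_le]
    constructor <;> nlinarith
  · -- main case E ≥ 4
    set s := Real.sqrt E with hs
    set M := ⌊s / 2⌋₊ with hMdef
    have hss : s ^ 2 = E := Real.sq_sqrt hE0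
    have hs2 : 2 ≤ s := by nlinarith [Real.sqrt_nonneg E]
    have hs0 : (0:ℝ) < s := by linarith
    have hMle : (M : ℝ) ≤ s / 2 := Nat.floor_le (by positivity)
    have hMgt : s / 2 < M + 1 := Nat.lt_floor_add_one _
    have hM1 : 1 ≤ M := Nat.le_floor (by push_cast; linarith)
    have hM0 : (0:ℝ) < M := by exact_mod_cast hM1
    have hM4 : s / 4 ≤ M := by
      rcases le_or_gt s 4 with h | h
      · calc s / 4 ≤ 1 := by linarith
          _ ≤ (M:ℝ) := by exact_mod_cast hM1
      · linarith
    -- nonnegativity of the interval half-lengths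
    have hL : ∀ n ∈ Finset.Icc 1 M, (0:ℝ) ≤ E / (4 * n) - n := by
      intro n hn
      rw [Finset.mem_Icc] at hn
      have hn0 : (0:ℝ) < n := by exact_mod_cast hn.1
      have hnM : (n:ℝ) ≤ M := by exact_mod_cast hn.2
      rw [sub_nonneg, le_div_iff₀ (by positivity)]
      nlinarith
    set H := ∑ n ∈ Finset.Icc 1 M, (1:ℝ) / n with hH
    -- counting vs. smooth sum
    have key : |(∑ n ∈ Finset.Icc 1 M,
          ((Finset.Icc ⌈b - (E / (4 * n) - n)⌉ ⌊b + (E / (4 * n) - n)⌋).card : ℝ))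
        - ∑ n ∈ Finset.Icc 1 M, 2 * (E / (4 * n) - n)| ≤ M := by
      rw [← Finset.sum_sub_distrib]
      refine (Finset.abs_sum_le_sum_abs _ _).trans ?_
      calc ∑ n ∈ Finset.Icc 1 M,
            |((Finset.Icc ⌈b - (E / (4 * n) - n)⌉ ⌊b + (E / (4 * n) - n)⌋).card : ℝ)
              - 2 * (E / (4 * n) - n)|
          ≤ ∑ _n ∈ Finset.Icc 1 M, (1:ℝ) :=
            Finset.sum_le_sum fun n hn => ab_card_bound b _ (hL n hn)
        _ = M := by simp
    have hT : (∑ n ∈ Finset.Icc 1 M, 2 * (E / (4 * n) - n))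
        = E / 2 * H - M * (M + 1) := by
      have hterm : ∀ n ∈ Finset.Icc 1 M,
          2 * (E / (4 * n) - n) = E / 2 * (1 / n) - 2 * n := by
        intro n hn
        rw [Finset.mem_Icc] at hn
        have hn0 : (0:ℝ) < n := by exact_mod_cast hn.1
        field_simp
        ring
      rw [Finset.sum_congr rfl hterm, Finset.sum_sub_distrib, ← Finset.mul_sum,
        ← Finset.mul_sum, ab_gauss]
      rw [hH]
      ring
    have hharm := ab_harmonic M hM1
    -- bound for the harmonic deviation term
    have g2 : |E / 2 * (H - Real.log M - Real.eulerMascheroniConstant)| ≤ 2 * s := by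
      rw [abs_mul, abs_of_nonneg (by positivity : (0:ℝ) ≤ E / 2)]
      calc E / 2 * |H - Real.log M - Real.eulerMascheroniConstant|
          ≤ E / 2 * (1 / M) := by gcongr
        _ ≤ 2 * s := by
            rw [mul_one_div, div_le_iff₀ hM0]
            have h5 : 2 * s * (s / 4) ≤ 2 * s * M := by gcongr
            linarith [h5, hss]
    -- bound for the log-mismatch term
    have g3 : |E / 2 * (Real.log 2 + Real.log M - Real.log s)| ≤ 2 * s := by
      have h2M : (0:ℝ) < 2 * M := by positivity
      have hle2M : 2 * (M:ℝ) ≤ s := by linarith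
      have hlog2M : Real.log 2 + Real.log M = Real.log (2 * M) :=
        (Real.log_mul (by norm_num) (ne_of_gt hM0)).symm
      have ha : Real.log (2 * M) ≤ Real.log s := Real.log_le_log h2M hle2M
      have hb : Real.log s - Real.log (2 * M) ≤ 1 / M := by
        rw [← Real.log_div (ne_of_gt hs0) (ne_of_gt h2M)]
        have h1 := Real.log_le_sub_one_of_pos (show (0:ℝ) < s / (2 * M) by positivity)
        have h2 : s / (2 * M) ≤ 1 + 1 / M := by
          rw [div_le_iff₀ h2M]
          have e : (1 + 1 / (M:ℝ)) * (2 * M) = 2 * M + 2 := by field_simp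
          rw [e]; linarith
        linarith
      rw [hlog2M, abs_mul, abs_of_nonneg (by positivity : (0:ℝ) ≤ E / 2)]
      have habs : |Real.log (2 * M) - Real.log s| ≤ 1 / M := by
        rw [abs_le]; constructor <;> linarith
      calc E / 2 * |Real.log (2 * M) - Real.log s| ≤ E / 2 * (1 / M) := by gcongr
        _ ≤ 2 * s := by
            rw [mul_one_div, div_le_iff₀ hM0]
            have h5 : 2 * s * (s / 4) ≤ 2 * s * M := by gcongr
            linarith [h5, hss]
    have g4a : (0:ℝ) ≤ E / 4 - M ^ 2 := by
      have h6 : (M:ℝ) ^ 2 ≤ (s / 2) ^ 2 := by gcongr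
      linarith [h6, hss]
    have g4b : E / 4 - (M:ℝ) ^ 2 ≤ s := by
      have h7 : (s / 2 - M) * (s / 2 + M) ≤ 1 * (s / 2 + M) :=
        mul_le_mul_of_nonneg_right (by linarith) (by positivity)
      linarith [h7, hss, hMle]
    have hlogE : Real.log E = 2 * Real.log s := by
      rw [hs, Real.log_sqrt hE0]; ring
    -- assemble
    push_cast
    rw [hT] at key
    have hXeq : ∀ N : ℝ, N - E / 4 * Real.log E
          - (Real.eulerMascheroniConstant - Real.log 2 - 1 / 2) * (E / 2)
        = (N - (E / 2 * H - M * (M + 1)))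
          + E / 2 * (H - Real.log M - Real.eulerMascheroniConstant)
          + E / 2 * (Real.log 2 + Real.log M - Real.log s)
          + (E / 4 - (M:ℝ) ^ 2) - M := by
      intro N
      rw [hlogE]
      ring
    rw [hXeq]
    rw [abs_le] at key g2 g3 ⊢
    constructor <;> [linarith [key.1, g2.1, g3.1]; linarith [key.2, g2.2, g3.2]]
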